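/- Let f(γ) = 2γ − Σ_{k≥1} k·ε_k/2^k for γ ∈ [1/2, 1) with binary digits (ε_k) (infinitely many zeros convention), and let T₀(x,y) = (x/2 + 1/4, (1−x+y)/2) and T₁(x,y) = (x/2 + 1/2, (1−x+y)/2). Then for every γ ∈ [1/2, 1): T₀(γ, f(γ)) = (γ/2 + 1/4, f(γ/2 + 1/4)) and T₁(γ, f(γ)) = (γ/2 + 1/2, f(γ/2 + 1/2)); i.e., the graph of f over [1/2,1) is invariant under the iterated function system {T₀, T₁} restricted to points of the graph. -/
import Mathlib


/-- The `k`-th binary digit of `x` (for `k ≥ 1`), via the floor expansion; this is the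
expansion with infinitely many zero digits. -/
noncomputable def binDigit (x : ℝ) (k : ℕ) : ℤ :=
  ⌊2 ^ k * x⌋ - 2 * ⌊2 ^ (k - 1) * x⌋

/-- `f(γ) = 2γ − Σ_{k≥1} k ε_k 2^{-k}`. -/
noncomputable def fSteinhaus (γ : ℝ) : ℝ :=
  2 * γ - ∑' k : ℕ, ((k + 1 : ℕ) : ℝ) * (binDigit γ (k + 1) : ℝ) / 2 ^ (k + 1)

/-- `T₀(x,y) = (x/2 + 1/4, (1 − x + y)/2)`. -/
noncomputable def T0 (v : ℝ × ℝ) : ℝ × ℝ := (v.1 / 2 + 1 / 4, (1 - v.1 + v.2) / 2)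

/-- `T₁(x,y) = (x/2 + 1/2, (1 − x + y)/2)`. -/
noncomputable def T1 (v : ℝ × ℝ) : ℝ × ℝ := (v.1 / 2 + 1 / 2, (1 - v.1 + v.2) / 2)

lemma binDigit_succ (x : ℝ) (k : ℕ) :
    binDigit x (k + 1) = ⌊2 ^ (k + 1) * x⌋ - 2 * ⌊2 ^ k * x⌋ := rfl

lemma binDigit_nonneg (x : ℝ) (k : ℕ) : 0 ≤ binDigit x (k + 1) := by
  rw [binDigit_succ]
  have h : (2 : ℝ) ^ (k + 1) * x = 2 * (2 ^ k * x) := by ring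
  rw [h]
  have h1 : ((2 * ⌊2 ^ k * x⌋ : ℤ) : ℝ) ≤ 2 * (2 ^ k * x) := by
    push_cast; linarith [Int.floor_le ((2 : ℝ) ^ k * x)]
  have := Int.le_floor.2 h1
  omega

lemma binDigit_le_one (x : ℝ) (k : ℕ) : binDigit x (k + 1) ≤ 1 := by
  rw [binDigit_succ]
  have h : (2 : ℝ) ^ (k + 1) * x = 2 * (2 ^ k * x) := by ring
  rw [h]
  have h1 : 2 * ((2 : ℝ) ^ k * x) < ((2 * ⌊2 ^ k * x⌋ + 2 : ℤ) : ℝ) := by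
    push_cast; linarith [Int.lt_floor_add_one ((2 : ℝ) ^ k * x)]
  have := Int.floor_lt.2 h1
  omega

lemma summable_binDigit_div (x : ℝ) :
    Summable (fun k : ℕ => (binDigit x (k + 1) : ℝ) / 2 ^ (k + 1)) := by
  have hg : Summable (fun k : ℕ => (1 / 2 : ℝ) * (1 / 2) ^ k) :=
    summable_geometric_two.mul_left _
  refine Summable.of_nonneg_of_le (fun k => ?_) (fun k => ?_) hg
  · have := binDigit_nonneg x k
    positivity
  · have hle := binDigit_le_one x k
    have h0 : (0 : ℝ) < 2 ^ (k + 1) := by positivity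
    rw [div_le_iff₀ h0]
    have : ((binDigit x (k + 1) : ℝ)) ≤ 1 := by exact_mod_cast hle
    calc (binDigit x (k + 1) : ℝ) ≤ 1 := this
      _ = (1 / 2) * (1 / 2) ^ k * 2 ^ (k + 1) := by
          rw [div_pow, one_pow]; field_simp; ring
    
lemma summable_main (x : ℝ) :
    Summable (fun k : ℕ => ((k + 1 : ℕ) : ℝ) * (binDigit x (k + 1) : ℝ) / 2 ^ (k + 1)) := by
  have hg0 : Summable (fun n : ℕ => (n : ℝ) ^ 1 * (1 / 2 : ℝ) ^ n) := by
    apply summable_pow_mul_geometric_of_norm_lt_one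
    rw [Real.norm_eq_abs, abs_of_nonneg] <;> norm_num
  have hg : Summable (fun n : ℕ => ((n + 1 : ℕ) : ℝ) * (1 / 2 : ℝ) ^ (n + 1)) := by
    have := (summable_nat_add_iff 1).2 hg0
    simpa using this
  refine Summable.of_nonneg_of_le (fun k => ?_) (fun k => ?_) hg
  · have := binDigit_nonneg x k
    positivity
  · have hle := binDigit_le_one x k
    have hd : ((binDigit x (k + 1) : ℝ)) ≤ 1 := by exact_mod_cast hle
    have h0 : (0 : ℝ) < 2 ^ (k + 1) := by positivity
    rw [div_le_iff₀ h0]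
    have hk : (0 : ℝ) ≤ ((k + 1 : ℕ) : ℝ) := by positivity
    calc ((k + 1 : ℕ) : ℝ) * (binDigit x (k + 1) : ℝ)
        ≤ ((k + 1 : ℕ) : ℝ) * 1 := by nlinarith [binDigit_nonneg x k]
      _ = ((k + 1 : ℕ) : ℝ) * (1 / 2) ^ (k + 1) * 2 ^ (k + 1) := by
          rw [div_pow, one_pow]; field_simp

lemma hasSum_binDigit (x : ℝ) (h0 : 0 ≤ x) (h1 : x < 1) :
    HasSum (fun k : ℕ => (binDigit x (k + 1) : ℝ) / 2 ^ (k + 1)) x := by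
  have hs := summable_binDigit_div x
  rw [hs.hasSum_iff_tendsto_nat]
  have hfx : ⌊x⌋ = 0 := Int.floor_eq_zero_iff.2 ⟨h0, h1⟩
  have key : ∀ n : ℕ, ∑ k ∈ Finset.range n, (binDigit x (k + 1) : ℝ) / 2 ^ (k + 1)
      = (⌊2 ^ n * x⌋ : ℝ) / 2 ^ n := by
    intro n
    induction n with
    | zero => simp [hfx]
    | succ n ih =>
      rw [Finset.sum_range_succ, ih, binDigit_succ]
      push_cast
      field_simp
      ring
  simp only [key]
  have hup : ∀ n : ℕ, (⌊(2:ℝ) ^ n * x⌋ : ℝ) / 2 ^ n ≤ x := by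
    intro n
    have h0n : (0 : ℝ) < 2 ^ n := by positivity
    rw [div_le_iff₀ h0n]
    calc (⌊(2:ℝ) ^ n * x⌋ : ℝ) ≤ 2 ^ n * x := Int.floor_le _
      _ = x * 2 ^ n := by ring
  have hlo : ∀ n : ℕ, x - (1 / 2 : ℝ) ^ n ≤ (⌊(2:ℝ) ^ n * x⌋ : ℝ) / 2 ^ n := by
    intro n
    have h0n : (0 : ℝ) < 2 ^ n := by positivity
    rw [le_div_iff₀ h0n]
    have := Int.lt_floor_add_one ((2:ℝ) ^ n * x)
    have hp : (1 / 2 : ℝ) ^ n * 2 ^ n = 1 := by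
      rw [div_pow, one_pow]; field_simp
    nlinarith
  have hl : Filter.Tendsto (fun n : ℕ => x - (1 / 2 : ℝ) ^ n) Filter.atTop (nhds x) := by
    have : Filter.Tendsto (fun n : ℕ => (1 / 2 : ℝ) ^ n) Filter.atTop (nhds 0) := by
      apply tendsto_pow_atTop_nhds_zero_of_lt_one <;> norm_num
    simpa using (tendsto_const_nhds.sub this)
  exact tendsto_of_tendsto_of_tendsto_of_le_of_le hl tendsto_const_nhds hlo hup

lemma floor_eq_of (r : ℝ) (z : ℤ) (hl : (z : ℝ) ≤ r) (hu : r < z + 1) : ⌊r⌋ = z :=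
  Int.floor_eq_iff.2 ⟨hl, hu⟩

lemma shift14 (γ : ℝ) (k : ℕ) :
    binDigit (γ / 2 + 1 / 4) (k + 1 + 1 + 1) = binDigit γ (k + 1 + 1) := by
  have e1 : (2 : ℝ) ^ (k + 1 + 1 + 1) * (γ / 2 + 1 / 4)
      = 2 ^ (k + 1 + 1) * γ + ((2 ^ (k + 1) : ℤ) : ℝ) := by push_cast; ring
  have e2 : (2 : ℝ) ^ (k + 1 + 1) * (γ / 2 + 1 / 4)
      = 2 ^ (k + 1) * γ + ((2 ^ k : ℤ) : ℝ) := by push_cast; ring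
  rw [binDigit_succ _ (k + 1 + 1), binDigit_succ _ (k + 1), e1, e2,
    Int.floor_add_intCast, Int.floor_add_intCast]
  ring

lemma shift12 (γ : ℝ) (k : ℕ) :
    binDigit (γ / 2 + 1 / 2) (k + 1 + 1 + 1) = binDigit γ (k + 1 + 1) := by
  have e1 : (2 : ℝ) ^ (k + 1 + 1 + 1) * (γ / 2 + 1 / 2)
      = 2 ^ (k + 1 + 1) * γ + ((2 ^ (k + 1 + 1) : ℤ) : ℝ) := by push_cast; ring
  have e2 : (2 : ℝ) ^ (k + 1 + 1) * (γ / 2 + 1 / 2)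
      = 2 ^ (k + 1) * γ + ((2 ^ (k + 1) : ℤ) : ℝ) := by push_cast; ring
  rw [binDigit_succ _ (k + 1 + 1), binDigit_succ _ (k + 1), e1, e2,
    Int.floor_add_intCast, Int.floor_add_intCast]
  ring

set_option maxHeartbeats 1000000 in
/-- Master computation of the series for the transformed point. -/
lemma fS_shift (γ γ' : ℝ) (e : ℤ)
    (hd1 : binDigit γ' 1 = 1) (hd2 : binDigit γ' 2 = e)
    (hshift : ∀ k : ℕ, binDigit γ' (k + 1 + 1 + 1) = binDigit γ (k + 1 + 1))
    (hγ0 : 0 ≤ γ) (hγ1 : γ < 1) (hd1γ : binDigit γ 1 = 1) :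
    fSteinhaus γ' = 2 * γ' - (1 / 2 + (e : ℝ) / 2
      + (1 / 2) * ((2 * γ - fSteinhaus γ) - 1 / 2) + (1 / 2) * (γ - 1 / 2)) := by
  set g : ℕ → ℝ := fun k => ((k + 1 : ℕ) : ℝ) * (binDigit γ (k + 1) : ℝ) / 2 ^ (k + 1) with hg
  set h : ℕ → ℝ := fun k => (binDigit γ (k + 1) : ℝ) / 2 ^ (k + 1) with hh
  set g' : ℕ → ℝ := fun k => ((k + 1 : ℕ) : ℝ) * (binDigit γ' (k + 1) : ℝ) / 2 ^ (k + 1) with hg'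
  have hsg : Summable g := summable_main γ
  have hsh : Summable h := summable_binDigit_div γ
  have hsg' : Summable g' := summable_main γ'
  have hsg1 : Summable (fun k => g (k + 1)) := (summable_nat_add_iff 1).2 hsg
  have hsh1 : Summable (fun k => h (k + 1)) := (summable_nat_add_iff 1).2 hsh
  have hsg'1 : Summable (fun k => g' (k + 1)) := (summable_nat_add_iff 1).2 hsg'
  have hsg'2 : Summable (fun k => g' (k + 1 + 1)) := (summable_nat_add_iff 1).2 hsg'1
  -- the tail of the γ' series
  have tail_eq : ∀ k : ℕ, g' (k + 1 + 1) = (1 / 2) * g (k + 1) + (1 / 2) * h (k + 1) := by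
    intro k
    simp only [hg, hh, hg']
    rw [hshift k]
    push_cast
    ring
  have hSh : ∑' k, h k = γ := (hasSum_binDigit γ hγ0 hγ1).tsum_eq
  have hh0 : h 0 = 1 / 2 := by simp only [hh]; norm_num [hd1γ]
  have hg0 : g 0 = 1 / 2 := by simp only [hg]; norm_num [hd1γ]
  have hg'0 : g' 0 = 1 / 2 := by simp only [hg']; norm_num [hd1]
  have hg'1v : g' 1 = (e : ℝ) / 2 := by
    simp only [hg']
    norm_num [hd2]
    ring
  have hTg : ∑' k, g (k + 1) = (∑' k, g k) - 1 / 2 := by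
    have := Summable.tsum_eq_zero_add hsg
    rw [this, hg0]; ring
  have hTh : ∑' k, h (k + 1) = γ - 1 / 2 := by
    have := Summable.tsum_eq_zero_add hsh
    rw [this] at hSh
    rw [hh0] at hSh
    linarith
  have hS' : ∑' k, g' k = g' 0 + (g' 1 + ∑' k, g' (k + 1 + 1)) := by
    rw [Summable.tsum_eq_zero_add hsg', Summable.tsum_eq_zero_add hsg'1]
  have htail : ∑' k, g' (k + 1 + 1)
      = (1 / 2) * ((∑' k, g k) - 1 / 2) + (1 / 2) * (γ - 1 / 2) := by
    calc ∑' k, g' (k + 1 + 1)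
        = ∑' k, ((1 / 2) * g (k + 1) + (1 / 2) * h (k + 1)) := tsum_congr tail_eq
      _ = (∑' k, (1 / 2) * g (k + 1)) + ∑' k, (1 / 2) * h (k + 1) :=
          Summable.tsum_add (hsg1.mul_left _) (hsh1.mul_left _)
      _ = (1 / 2) * (∑' k, g (k + 1)) + (1 / 2) * (∑' k, h (k + 1)) := by
          rw [tsum_mul_left, tsum_mul_left]
      _ = (1 / 2) * ((∑' k, g k) - 1 / 2) + (1 / 2) * (γ - 1 / 2) := by
          rw [hTg, hTh]
  have hfγ : ∑' k, g k = 2 * γ - fSteinhaus γ := by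
    simp only [fSteinhaus, hg]; ring
  have : fSteinhaus γ' = 2 * γ' - ∑' k, g' k := by
    simp only [fSteinhaus, hg']
  rw [this, hS', htail, hg'0, hg'1v, hfγ]
  ring

/-- the graph of `f` over `[1/2,1)` is invariant under the IFS `{T₀, T₁}`:
`T₀(γ, f(γ)) = (γ/2+1/4, f(γ/2+1/4))` and `T₁(γ, f(γ)) = (γ/2+1/2, f(γ/2+1/2))`. -/
theorem graph_f_IFS_invariant (γ : ℝ) (h1 : 1 / 2 ≤ γ) (h2 : γ < 1) :
    T0 (γ, fSteinhaus γ) = (γ / 2 + 1 / 4, fSteinhaus (γ / 2 + 1 / 4)) ∧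
      T1 (γ, fSteinhaus γ) = (γ / 2 + 1 / 2, fSteinhaus (γ / 2 + 1 / 2)) := by
  have hγ0 : (0 : ℝ) ≤ γ := by linarith
  have hfl2γ : ⌊(2 : ℝ) * γ⌋ = 1 := floor_eq_of _ 1 (by push_cast; linarith) (by push_cast; linarith)
  have hflγ : ⌊γ⌋ = 0 := floor_eq_of _ 0 (by push_cast; linarith) (by push_cast; linarith)
  have hd1γ : binDigit γ 1 = 1 := by
    have : binDigit γ 1 = ⌊(2:ℝ) ^ 1 * γ⌋ - 2 * ⌊(2:ℝ) ^ 0 * γ⌋ := rfl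
    rw [this, show ((2:ℝ) ^ 1 * γ) = 2 * γ by ring, show ((2:ℝ) ^ 0 * γ) = γ by ring,
      hfl2γ, hflγ]
    norm_num
  -- digits of γ/2 + 1/4
  have hA1 : binDigit (γ / 2 + 1 / 4) 1 = 1 := by
    have e1 : ⌊(2:ℝ) ^ 1 * (γ / 2 + 1 / 4)⌋ = 1 :=
      floor_eq_of _ 1 (by push_cast; linarith) (by push_cast; linarith)
    have e0 : ⌊(2:ℝ) ^ 0 * (γ / 2 + 1 / 4)⌋ = 0 :=
      floor_eq_of _ 0 (by push_cast; linarith) (by push_cast; linarith)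
    have : binDigit (γ / 2 + 1 / 4) 1 = ⌊(2:ℝ) ^ 1 * (γ / 2 + 1 / 4)⌋
        - 2 * ⌊(2:ℝ) ^ 0 * (γ / 2 + 1 / 4)⌋ := rfl
    rw [this, e1, e0]
    norm_num
  have hA2 : binDigit (γ / 2 + 1 / 4) 2 = 0 := by
    have e2 : ⌊(2:ℝ) ^ 2 * (γ / 2 + 1 / 4)⌋ = 2 :=
      floor_eq_of _ 2 (by push_cast; linarith) (by push_cast; linarith)
    have e1 : ⌊(2:ℝ) ^ 1 * (γ / 2 + 1 / 4)⌋ = 1 :=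
      floor_eq_of _ 1 (by push_cast; linarith) (by push_cast; linarith)
    have : binDigit (γ / 2 + 1 / 4) 2 = ⌊(2:ℝ) ^ 2 * (γ / 2 + 1 / 4)⌋
        - 2 * ⌊(2:ℝ) ^ 1 * (γ / 2 + 1 / 4)⌋ := rfl
    rw [this, e2, e1]
    norm_num
  -- digits of γ/2 + 1/2
  have hB1 : binDigit (γ / 2 + 1 / 2) 1 = 1 := by
    have e1 : ⌊(2:ℝ) ^ 1 * (γ / 2 + 1 / 2)⌋ = 1 :=
      floor_eq_of _ 1 (by push_cast; linarith) (by push_cast; linarith)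
    have e0 : ⌊(2:ℝ) ^ 0 * (γ / 2 + 1 / 2)⌋ = 0 :=
      floor_eq_of _ 0 (by push_cast; linarith) (by push_cast; linarith)
    have : binDigit (γ / 2 + 1 / 2) 1 = ⌊(2:ℝ) ^ 1 * (γ / 2 + 1 / 2)⌋
        - 2 * ⌊(2:ℝ) ^ 0 * (γ / 2 + 1 / 2)⌋ := rfl
    rw [this, e1, e0]
    norm_num
  have hB2 : binDigit (γ / 2 + 1 / 2) 2 = 1 := by
    have e2 : ⌊(2:ℝ) ^ 2 * (γ / 2 + 1 / 2)⌋ = 3 :=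
      floor_eq_of _ 3 (by push_cast; linarith) (by push_cast; linarith)
    have e1 : ⌊(2:ℝ) ^ 1 * (γ / 2 + 1 / 2)⌋ = 1 :=
      floor_eq_of _ 1 (by push_cast; linarith) (by push_cast; linarith)
    have : binDigit (γ / 2 + 1 / 2) 2 = ⌊(2:ℝ) ^ 2 * (γ / 2 + 1 / 2)⌋
        - 2 * ⌊(2:ℝ) ^ 1 * (γ / 2 + 1 / 2)⌋ := rfl
    rw [this, e2, e1]
    norm_num
  have key0 := fS_shift γ (γ / 2 + 1 / 4) 0 hA1 hA2 (shift14 γ) hγ0 h2 hd1γ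
  have key1 := fS_shift γ (γ / 2 + 1 / 2) 1 hB1 hB2 (shift12 γ) hγ0 h2 hd1γ
  constructor
  · simp only [T0, Prod.mk.injEq]
    constructor
    · trivial
    · rw [key0]; push_cast; ring
  · simp only [T1, Prod.mk.injEq]
    constructor
    · trivial
    · rw [key1]; push_cast; ring
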